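/- arXiv:1003.4595 — 12 statements merged into one kernel-verified Lean document; each statement's English description precedes it below -/
import Mathlib

section
/- Let μ be a fuzzy set of an MTL-algebra L. Then μ is a fuzzy filter of L if and only if for every t ∈ (0,1] the q-level set F_q(t) = {x ∈ L : μ(x) + t > 1} is either empty or a filter of L. -/
/-- An MTL-algebra: a bounded lattice with `⊥ ≠ ⊤`, a product `odot` and residuum `rimp`,
where `odot` is associative, commutative and monotone in each argument, `⊤` is a unit,
the Galois correspondence holds and prelinearity holds. -/
class MTL (L : Type*) extends Lattice L, BoundedOrder L where
  odot : L → L → L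
  rimp : L → L → L
  bot_ne_top : (⊥ : L) ≠ ⊤
  odot_assoc : ∀ x y z : L, odot (odot x y) z = odot x (odot y z)
  odot_comm : ∀ x y : L, odot x y = odot y x
  odot_mono_left : ∀ x y z : L, x ≤ y → odot x z ≤ odot y z
  odot_mono_right : ∀ x y z : L, x ≤ y → odot z x ≤ odot z y
  odot_top : ∀ x : L, odot x ⊤ = x
  galois : ∀ x y z : L, odot x y ≤ z ↔ x ≤ rimp y z
  prelinear : ∀ x y : L, rimp x y ⊔ rimp y x = ⊤

open MTL

variable {L : Type*} [MTL L]

/-- A subset `A` is a filter: `1 ∈ A` and it is closed under modus ponens. -/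
def IsFilter' (A : Set L) : Prop :=
  (⊤ : L) ∈ A ∧ ∀ x y : L, x ∈ A → rimp x y ∈ A → y ∈ A

/-- A fuzzy filter: `μ(1) ≥ μ(x)` and `μ(y) ≥ min(μ(x → y), μ(x))`. -/
def IsFuzzyFilter (μ : L → ℝ) : Prop :=
  (∀ x : L, μ ⊤ ≥ μ x) ∧ ∀ x y : L, μ y ≥ min (μ (rimp x y)) (μ x)

theorem stmt_1 (μ : L → ℝ) (hμ0 : ∀ x : L, 0 ≤ μ x) (hμ1 : ∀ x : L, μ x ≤ 1) :
    IsFuzzyFilter μ ↔ (∀ t : ℝ, 0 < t → t ≤ 1 → ({x : L | 1 < μ x + t} = ∅ ∨ IsFilter' {x : L | 1 < μ x + t})) := by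
  constructor
  · rintro ⟨h1, h2⟩ t ht0 ht1
    rcases Set.eq_empty_or_nonempty {x : L | 1 < μ x + t} with he | ⟨x, hx⟩
    · exact Or.inl he
    · refine Or.inr ⟨?_, ?_⟩
      · have hx' : 1 < μ x + t := hx
        show 1 < μ ⊤ + t
        linarith [h1 x]
      · intro a b ha hb
        have h := h2 a b
        simp only [Set.mem_setOf_eq] at ha hb ⊢
        have hmin : 1 - t < min (μ (rimp a b)) (μ a) :=
          lt_min_iff.mpr ⟨by linarith, by linarith⟩
        linarith
  · intro H
    constructor
    · intro x
      by_contra hlt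
      push_neg at hlt
      set t := 1 - μ ⊤ with ht
      have ht0 : 0 < t := by linarith [hμ1 x]
      have ht1 : t ≤ 1 := by linarith [hμ0 ⊤]
      rcases H t ht0 ht1 with he | hf
      · have : x ∈ {x : L | 1 < μ x + t} := by simp [Set.mem_setOf_eq]; linarith
        simp [he] at this
      · have := hf.1
        simp only [Set.mem_setOf_eq] at this
        linarith
    · intro x y
      by_contra hlt
      push_neg at hlt
      have hm := lt_min_iff.mp hlt
      set t := 1 - μ y with ht
      have ht0 : 0 < t := by linarith [hμ1 (rimp x y), min_le_left (μ (rimp x y)) (μ x)]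
      have ht1 : t ≤ 1 := by linarith [hμ0 y]
      rcases H t ht0 ht1 with he | hf
      · have : x ∈ {z : L | 1 < μ z + t} := by simp [Set.mem_setOf_eq]; linarith [hm.2]
        simp [he] at this
      · have hy := hf.2 x y (by simp [Set.mem_setOf_eq]; linarith [hm.2])
          (by simp [Set.mem_setOf_eq]; linarith [hm.1])
        simp only [Set.mem_setOf_eq] at hy
        linarith
end

section
/- Let μ be a fuzzy set of an MTL-algebra L. Then μ is an (∈,∈∨q)-fuzzy filter of L if and only if for every t ∈ (0, 0.5] the ∈-level set F(t) = {x ∈ L : μ(x) ≥ t} is either empty or a filter of L. -/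
open MTL

variable {L : Type*} [MTL L]

/-- An (∈,∈∨q)-fuzzy filter: `μ(1) ≥ min(μ(x), 0.5)` and
`μ(y) ≥ min(μ(x → y), μ(x), 0.5)`. -/
def IsEIVQFuzzyFilter (μ : L → ℝ) : Prop :=
  (∀ x : L, μ ⊤ ≥ min (μ x) (1/2)) ∧
    ∀ x y : L, μ y ≥ min (min (μ (rimp x y)) (μ x)) (1/2)

theorem stmt_2 (μ : L → ℝ) (hμ0 : ∀ x : L, 0 ≤ μ x) (hμ1 : ∀ x : L, μ x ≤ 1) :
    IsEIVQFuzzyFilter μ ↔ (∀ t : ℝ, 0 < t → t ≤ 1/2 → ({x : L | t ≤ μ x} = ∅ ∨ IsFilter' {x : L | t ≤ μ x})) := by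
  constructor
  · rintro ⟨h1, h2⟩ t ht ht2
    by_cases he : ({x : L | t ≤ μ x} = ∅)
    · exact Or.inl he
    · right
      obtain ⟨x, hx⟩ := Set.nonempty_iff_ne_empty.mpr he
      constructor
      · exact le_trans (le_min hx ht2) (h1 x)
      · intro a b ha hrab
        exact le_trans (le_min (le_min hrab ha) ht2) (h2 a b)
  · intro h
    constructor
    · intro x
      rcases le_or_gt (min (μ x) (1/2)) 0 with h0 | h0
      · exact le_trans h0 (hμ0 ⊤)
      · have := h _ h0 (min_le_right _ _)
        rcases this with he | hf
        · exfalso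
          have : x ∈ ({y : L | min (μ x) (1/2) ≤ μ y}) := Set.mem_setOf.mpr (min_le_left _ _)
          rw [he] at this; exact this
        · exact hf.1
    · intro x y
      set t := min (min (μ (rimp x y)) (μ x)) (1/2) with hts
      rcases le_or_gt t 0 with h0 | h0
      · exact le_trans h0 (hμ0 y)
      · have := h t h0 (min_le_right _ _)
        rcases this with he | hf
        · exfalso
          have : x ∈ ({z : L | t ≤ μ z}) := Set.mem_setOf.mpr <| le_trans (min_le_left _ _) (min_le_right _ _)
          rw [he] at this; exact this
        · exact hf.2 x y (Set.mem_setOf.mpr <| le_trans (min_le_left _ _) (min_le_right _ _))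
            (Set.mem_setOf.mpr <| le_trans (min_le_left _ _) (min_le_left _ _))
end

section
/- Let μ be a fuzzy set of an MTL-algebra L. Then for every t ∈ (0.5, 1] the q-level set F_q(t) = {x ∈ L : μ(x) + t > 1} is either empty or a filter of L if and only if μ is an (∈,∈∨q)-fuzzy filter of L. -/
open MTL

variable {L : Type*} [MTL L]

theorem stmt_5 (μ : L → ℝ) (hμ0 : ∀ x : L, 0 ≤ μ x) (hμ1 : ∀ x : L, μ x ≤ 1) :
    (∀ t : ℝ, 1/2 < t → t ≤ 1 → ({x : L | 1 < μ x + t} = ∅ ∨ IsFilter' {x : L | 1 < μ x + t})) ↔ IsEIVQFuzzyFilter μ := by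
  constructor
  · intro h
    constructor
    · intro x
      by_contra hc
      push_neg at hc
      have hm2 : min (μ x) (1/2 : ℝ) ≤ 1/2 := min_le_right _ _
      have ht1 : (1:ℝ)/2 < 1 - μ ⊤ := by linarith
      have ht2 : 1 - μ ⊤ ≤ 1 := by have := hμ0 ⊤; linarith
      have hx : x ∈ {x : L | 1 < μ x + (1 - μ ⊤)} := by
        simp only [Set.mem_setOf_eq]
        have : μ ⊤ < μ x := lt_of_lt_of_le hc (min_le_left _ _)
        linarith
      rcases h (1 - μ ⊤) ht1 ht2 with he | hf
      · rw [he] at hx; exact hx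
      · have := hf.1
        simp only [Set.mem_setOf_eq] at this
        linarith
    · intro x y
      by_contra hc
      push_neg at hc
      have hm2 : min (min (μ (rimp x y)) (μ x)) (1/2 : ℝ) ≤ 1/2 := min_le_right _ _
      have ht1 : (1:ℝ)/2 < 1 - μ y := by linarith
      have ht2 : 1 - μ y ≤ 1 := by have := hμ0 y; linarith
      have h1 : x ∈ {x : L | 1 < μ x + (1 - μ y)} := by
        simp only [Set.mem_setOf_eq]
        have : μ y < μ x :=
          lt_of_lt_of_le hc (le_trans (min_le_left _ _) (min_le_right _ _))
        linarith
      rcases h (1 - μ y) ht1 ht2 with he | hf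
      · rw [he] at h1; exact h1
      · have h2 : rimp x y ∈ {x : L | 1 < μ x + (1 - μ y)} := by
          simp only [Set.mem_setOf_eq]
          have : μ y < μ (rimp x y) :=
            lt_of_lt_of_le hc (le_trans (min_le_left _ _) (min_le_left _ _))
          linarith
        have := hf.2 x y h1 h2
        simp only [Set.mem_setOf_eq] at this
        linarith
  · rintro ⟨h1, h2⟩ t ht1 ht2
    by_cases hne : {x : L | 1 < μ x + t} = ∅
    · exact Or.inl hne
    · right
      obtain ⟨x0, hx0⟩ := Set.nonempty_iff_ne_empty.mpr hne
      simp only [Set.mem_setOf_eq] at hx0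
      constructor
      · simp only [Set.mem_setOf_eq]
        have hmin : 1 - t < min (μ x0) (1/2 : ℝ) :=
          lt_min (by linarith) (by linarith)
        have := h1 x0
        linarith
      · intro x y hx hy
        simp only [Set.mem_setOf_eq] at hx hy ⊢
        have hmin : 1 - t < min (min (μ (rimp x y)) (μ x)) (1/2 : ℝ) :=
          lt_min (lt_min (by linarith) (by linarith)) (by linarith)
        have := h2 x y
        linarith
end

section
/- Let μ be a fuzzy set of an MTL-algebra L and let 0 < α < β ≤ 1. Then for every t ∈ (α, β] the ∈-level set F(t) = {x ∈ L : μ(x) ≥ t} is either empty or a filter of L if and only if μ is a fuzzy filter with thresholds (α, β] of L. -/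
open MTL

variable {L : Type*} [MTL L]

/-- A fuzzy filter with thresholds `(α, β]`: `max(μ(1), α) ≥ min(μ(x), β)` and
`max(μ(y), α) ≥ min(μ(x → y), μ(x), β)`. -/
def IsThresholdFuzzyFilter (μ : L → ℝ) (α β : ℝ) : Prop :=
  (∀ x : L, max (μ ⊤) α ≥ min (μ x) β) ∧
    ∀ x y : L, max (μ y) α ≥ min (min (μ (rimp x y)) (μ x)) β

theorem stmt_6 (μ : L → ℝ) (hμ0 : ∀ x : L, 0 ≤ μ x) (hμ1 : ∀ x : L, μ x ≤ 1) (α β : ℝ) (hα : 0 < α) (hαβ : α < β) (hβ : β ≤ 1) :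
    (∀ t : ℝ, α < t → t ≤ β → ({x : L | t ≤ μ x} = ∅ ∨ IsFilter' {x : L | t ≤ μ x})) ↔ IsThresholdFuzzyFilter μ α β := by
  constructor
  · intro h
    constructor
    · intro x
      by_contra hc
      push_neg at hc
      set t := min (μ x) β with ht
      have htα : α < t := lt_of_le_of_lt (le_max_right _ _) hc
      have htβ : t ≤ β := min_le_right _ _
      have hx : x ∈ {z : L | t ≤ μ z} := show t ≤ μ x from min_le_left _ _
      rcases h t htα htβ with he | hf
      · exact absurd (he ▸ hx) (Set.notMem_empty x)
      · have := hf.1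
        have : t ≤ μ ⊤ := this
        exact absurd (lt_of_le_of_lt (le_trans this (le_max_left _ _)) hc) (lt_irrefl t)
    · intro x y
      by_contra hc
      push_neg at hc
      set t := min (min (μ (rimp x y)) (μ x)) β with ht
      have htα : α < t := lt_of_le_of_lt (le_max_right _ _) hc
      have htβ : t ≤ β := min_le_right _ _
      have hx : x ∈ {z : L | t ≤ μ z} :=
        show t ≤ μ x from le_trans (min_le_left _ _) (min_le_right _ _)
      have hxy : rimp x y ∈ {z : L | t ≤ μ z} :=
        show t ≤ μ (rimp x y) from le_trans (min_le_left _ _) (min_le_left _ _)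
      rcases h t htα htβ with he | hf
      · exact absurd (he ▸ hx) (Set.notMem_empty x)
      · have hy : t ≤ μ y := hf.2 x y hx hxy
        exact absurd (lt_of_le_of_lt (le_trans hy (le_max_left _ _)) hc) (lt_irrefl t)
  · intro h t htα htβ
    rcases Set.eq_empty_or_nonempty {x : L | t ≤ μ x} with he | ⟨a, ha⟩
    · exact Or.inl he
    right
    constructor
    · have h1 := h.1 a
      have : t ≤ min (μ a) β := le_min ha htβ
      have h2 : t ≤ max (μ ⊤) α := le_trans this h1
      rcases le_max_iff.mp h2 with h3 | h3
      · exact h3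
      · exact absurd h3 (not_le.mpr htα)
    · intro x y hx hxy
      have h1 := h.2 x y
      have : t ≤ min (min (μ (rimp x y)) (μ x)) β := le_min (le_min hxy hx) htβ
      have h2 : t ≤ max (μ y) α := le_trans this h1
      rcases le_max_iff.mp h2 with h3 | h3
      · exact h3
      · exact absurd h3 (not_le.mpr htα)
end

section
/- Let μ be a fuzzy set of an MTL-algebra L. Then for every t ∈ (0,1] the ∈-level set F(t) = {x ∈ L : μ(x) ≥ t} is either empty or a Boolean filter of L if and only if μ is a fuzzy Boolean filter of L. -/
open MTL

variable {L : Type*} [MTL L]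

/-- A Boolean filter: a filter containing `x ∨ x'` for all `x`, where `x' = x → 0`. -/
def IsBooleanFilter (A : Set L) : Prop :=
  IsFilter' A ∧ ∀ x : L, x ⊔ rimp x ⊥ ∈ A

/-- A fuzzy Boolean filter: a fuzzy filter with `μ(x ∨ x') = μ(1)` for all `x`. -/
def IsFuzzyBooleanFilter (μ : L → ℝ) : Prop :=
  IsFuzzyFilter μ ∧ ∀ x : L, μ (x ⊔ rimp x ⊥) = μ ⊤

theorem stmt_7 (μ : L → ℝ) (hμ0 : ∀ x : L, 0 ≤ μ x) (hμ1 : ∀ x : L, μ x ≤ 1) :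
    (∀ t : ℝ, 0 < t → t ≤ 1 → ({x : L | t ≤ μ x} = ∅ ∨ IsBooleanFilter {x : L | t ≤ μ x})) ↔ IsFuzzyBooleanFilter μ := by

  constructor
  · intro h
    have key : ∀ x : L, ∀ t : ℝ, 0 < t → t ≤ μ x → IsBooleanFilter {y : L | t ≤ μ y} := by
      intro x t ht htx
      rcases h t ht (htx.trans (hμ1 x)) with he | hf
      · exact absurd he (by intro he; exact (Set.eq_empty_iff_forall_notMem.mp he x htx))
      · exact hf
    have hmem : ∀ x : L, ∀ t : ℝ, 0 < t → t ≤ μ x → t ≤ μ (⊤ : L) := by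
      intro x t ht htx
      exact (key x t ht htx).1.1
    have htop : ∀ x : L, μ (⊤ : L) ≥ μ x := by
      intro x
      rcases lt_or_ge 0 (μ x) with hp | hp
      · exact hmem x (μ x) hp le_rfl
      · exact hp.trans (hμ0 ⊤)
    refine ⟨⟨htop, ?_⟩, ?_⟩
    · intro x y
      set t := min (μ (rimp x y)) (μ x) with hts
      rcases lt_or_ge 0 t with hp | hp
      · have hk := key x t hp (min_le_right _ _)
        exact hk.1.2 x y (min_le_right (μ (rimp x y)) (μ x)) (min_le_left (μ (rimp x y)) (μ x))
      · exact hp.trans (hμ0 y)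
    · intro x
      refine le_antisymm (htop _) ?_
      rcases lt_or_ge 0 (μ (⊤ : L)) with hp | hp
      · exact (key ⊤ (μ ⊤) hp le_rfl).2 x
      · exact (hμ0 _).trans' hp
  · rintro ⟨⟨htop, hmp⟩, hb⟩ t ht ht1
    by_cases he : {x : L | t ≤ μ x} = ∅
    · exact Or.inl he
    right
    obtain ⟨z, hz⟩ := Set.nonempty_iff_ne_empty.mpr he
    have htT : t ≤ μ (⊤ : L) := hz.trans (htop z)
    refine ⟨⟨htT, ?_⟩, ?_⟩
    · intro x y hx hxy
      exact le_trans (le_min hxy hx) (hmp x y)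
    · intro x
      rw [Set.mem_setOf_eq, hb x]; exact htT
end

section
/- Let μ be a fuzzy set of an MTL-algebra L. Then μ is a fuzzy Boolean filter of L if and only if for every t ∈ (0,1] the q-level set F_q(t) = {x ∈ L : μ(x) + t > 1} is either empty or a Boolean filter of L. -/
open MTL

variable {L : Type*} [MTL L]

theorem stmt_8 (μ : L → ℝ) (hμ0 : ∀ x : L, 0 ≤ μ x) (hμ1 : ∀ x : L, μ x ≤ 1) :
    IsFuzzyBooleanFilter μ ↔ (∀ t : ℝ, 0 < t → t ≤ 1 → ({x : L | 1 < μ x + t} = ∅ ∨ IsBooleanFilter {x : L | 1 < μ x + t})) := by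
  constructor
  · rintro ⟨⟨h1, h2⟩, h3⟩ t ht0 ht1
    by_cases hne : ({x : L | 1 < μ x + t} : Set L) = ∅
    · exact Or.inl hne
    right
    obtain ⟨a, ha⟩ := Set.nonempty_iff_ne_empty.2 hne
    have htop : (⊤ : L) ∈ {x : L | 1 < μ x + t} := by
      have := h1 a
      simp only [Set.mem_setOf_eq] at ha ⊢
      linarith
    refine ⟨⟨htop, ?_⟩, ?_⟩
    · intro x y hx hxy
      simp only [Set.mem_setOf_eq] at hx hxy ⊢
      have hmin : (1 : ℝ) - t < min (μ (rimp x y)) (μ x) := lt_min (by linarith) (by linarith)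
      have := h2 x y
      simp only [ge_iff_le] at this
      linarith
    · intro x
      simp only [Set.mem_setOf_eq]
      rw [h3 x]
      simpa using htop
  · intro h
    have key : ∀ x : L, μ ⊤ ≥ μ x := by
      intro x
      by_contra hc
      push_neg at hc
      set t := 1 - μ ⊤ with ht
      have ht0 : 0 < t := by have := hμ1 x; simp only [ht]; linarith
      have ht1 : t ≤ 1 := by have := hμ0 ⊤; simp only [ht]; linarith
      rcases h t ht0 ht1 with hemp | hbf
      · have : x ∈ {y : L | 1 < μ y + t} := by simp only [Set.mem_setOf_eq, ht]; linarith
        rw [hemp] at this; exact this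
      · have := hbf.1.1
        simp only [Set.mem_setOf_eq, ht] at this
        linarith
    refine ⟨⟨key, ?_⟩, ?_⟩
    · intro x y
      by_contra hc
      push_neg at hc
      set m := min (μ (rimp x y)) (μ x) with hm
      have hm1 : m ≤ 1 := le_trans (min_le_right _ _) (hμ1 x)
      set t := 1 - μ y with ht
      have ht0 : 0 < t := by have := hμ0 y; simp only [ht]; linarith
      have ht1 : t ≤ 1 := by have := hμ0 y; simp only [ht]; linarith
      rcases h t ht0 ht1 with hemp | hbf
      · have : x ∈ {z : L | 1 < μ z + t} := by
          simp only [Set.mem_setOf_eq, ht]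
          have := min_le_right (μ (rimp x y)) (μ x)
          linarith
        rw [hemp] at this; exact this
      · have hx : x ∈ {z : L | 1 < μ z + t} := by
          simp only [Set.mem_setOf_eq, ht]
          have := min_le_right (μ (rimp x y)) (μ x)
          linarith
        have hxy : rimp x y ∈ {z : L | 1 < μ z + t} := by
          simp only [Set.mem_setOf_eq, ht]
          have := min_le_left (μ (rimp x y)) (μ x)
          linarith
        have hy := hbf.1.2 x y hx hxy
        simp only [Set.mem_setOf_eq, ht] at hy
        linarith
    · intro x
      refine le_antisymm (key _) ?_
      by_contra hc
      push_neg at hc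
      set t := 1 - μ (x ⊔ rimp x ⊥) with ht
      have ht0 : 0 < t := by have := hμ1 ⊤; simp only [ht]; linarith
      have ht1 : t ≤ 1 := by have := hμ0 (x ⊔ rimp x ⊥); simp only [ht]; linarith
      rcases h t ht0 ht1 with hemp | hbf
      · have : (⊤ : L) ∈ {z : L | 1 < μ z + t} := by
          simp only [Set.mem_setOf_eq, ht]; linarith
        rw [hemp] at this; exact this
      · have := hbf.2 x
        simp only [Set.mem_setOf_eq, ht] at this
        linarith
end

section
/- Let μ be a fuzzy set of an MTL-algebra L. Then for every t ∈ (0, 0.5] the ∈-level set F(t) = {x ∈ L : μ(x) ≥ t} is either empty or a Boolean filter of L if and only if μ is an (∈,∈∨q)-fuzzy Boolean filter of L. -/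
open MTL

variable {L : Type*} [MTL L]

/-- An (∈,∈∨q)-fuzzy Boolean filter:
`μ(x → z) ≥ min(μ(x → (z' → y)), μ(y → z), 0.5)`. -/
def IsEIVQFuzzyBooleanFilter (μ : L → ℝ) : Prop :=
  IsEIVQFuzzyFilter μ ∧
    ∀ x y z : L, μ (rimp x z) ≥
      min (min (μ (rimp x (rimp (rimp z ⊥) y))) (μ (rimp y z))) (1/2)

section Aux

lemma mtl_mp (a b : L) : odot (rimp a b) a ≤ b := (galois _ _ _).mpr le_rfl

lemma mtl_le_of_odot_le {a b c : L} (h : odot a b ≤ c) : a ≤ rimp b c := (galois _ _ _).mp h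

lemma mtl_rimp_top_of_le {a b : L} (h : a ≤ b) : rimp a b = ⊤ := by
  apply le_antisymm le_top
  apply mtl_le_of_odot_le
  calc odot ⊤ a = odot a ⊤ := odot_comm _ _
    _ = a := odot_top a
    _ ≤ b := h

lemma mtl_top_rimp (a : L) : rimp ⊤ a = a := by
  apply le_antisymm
  · calc rimp ⊤ a = odot (rimp ⊤ a) ⊤ := (odot_top _).symm
      _ ≤ a := mtl_mp _ _
  · exact mtl_le_of_odot_le (by rw [odot_top])

lemma mtl_rimp_anti {a b : L} (c : L) (h : a ≤ b) : rimp b c ≤ rimp a c := by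
  apply mtl_le_of_odot_le
  calc odot (rimp b c) a ≤ odot (rimp b c) b := odot_mono_right _ _ _ h
    _ ≤ c := mtl_mp _ _

lemma mtl_trans (a b c : L) : odot (rimp a b) (rimp b c) ≤ rimp a c := by
  apply mtl_le_of_odot_le
  rw [odot_comm (rimp a b) (rimp b c), odot_assoc]
  calc odot (rimp b c) (odot (rimp a b) a) ≤ odot (rimp b c) b :=
        odot_mono_right _ _ _ (mtl_mp _ _)
    _ ≤ c := mtl_mp _ _

lemma mtl_suffix (u a b : L) : rimp a b ≤ rimp (rimp u a) (rimp u b) := by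
  apply mtl_le_of_odot_le
  rw [odot_comm]
  exact mtl_trans u a b

lemma mtl_distrib_le (a b c : L) : odot a (b ⊔ c) ≤ odot a b ⊔ odot a c := by
  rw [odot_comm]
  apply (galois _ _ _).mpr
  apply sup_le
  · exact mtl_le_of_odot_le (by rw [odot_comm]; exact le_sup_left)
  · exact mtl_le_of_odot_le (by rw [odot_comm]; exact le_sup_right)

lemma filter_up {A : Set L} (hA : IsFilter' A) {a b : L} (ha : a ∈ A) (h : a ≤ b) : b ∈ A := by
  apply hA.2 a b ha
  rw [mtl_rimp_top_of_le h]
  exact hA.1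

lemma filter_odot {A : Set L} (hA : IsFilter' A) {a b : L} (ha : a ∈ A) (hb : b ∈ A) :
    odot a b ∈ A := by
  have h1 : b ≤ rimp a (odot a b) := mtl_le_of_odot_le (by rw [odot_comm])
  exact hA.2 a (odot a b) ha (filter_up hA hb h1)

lemma boolean_key {A : Set L} (hA : IsBooleanFilter A) (x y z : L)
    (h1 : rimp x (rimp (rimp z ⊥) y) ∈ A) (h2 : rimp y z ∈ A) : rimp x z ∈ A := by
  set z' := rimp z ⊥ with hz'
  have hs : rimp (rimp z' y) (rimp z' z) ∈ A :=
    filter_up hA.1 h2 (mtl_suffix z' y z)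
  have h3 : rimp x (rimp z' z) ∈ A :=
    filter_up hA.1 (filter_odot hA.1 h1 hs) (mtl_trans x (rimp z' y) (rimp z' z))
  have hb : z ⊔ z' ∈ A := hA.2 z
  have h4 : odot (z ⊔ z') (rimp x (rimp z' z)) ∈ A := filter_odot hA.1 hb h3
  apply filter_up hA.1 h4
  apply mtl_le_of_odot_le
  rw [odot_assoc]
  calc odot (z ⊔ z') (odot (rimp x (rimp z' z)) x)
      ≤ odot (z ⊔ z') (rimp z' z) := odot_mono_right _ _ _ (mtl_mp _ _)
    _ ≤ odot (z ⊔ z') (rimp z' z) := le_rfl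
    _ = odot (rimp z' z) (z ⊔ z') := odot_comm _ _
    _ ≤ odot (rimp z' z) z ⊔ odot (rimp z' z) z' := mtl_distrib_le _ _ _
    _ ≤ z := by
        apply sup_le
        · calc odot (rimp z' z) z = odot z (rimp z' z) := odot_comm _ _
            _ ≤ odot z ⊤ := odot_mono_right _ _ _ le_top
            _ = z := odot_top z
        · exact mtl_mp z' z

end Aux

theorem stmt_9 (μ : L → ℝ) (hμ0 : ∀ x : L, 0 ≤ μ x) (hμ1 : ∀ x : L, μ x ≤ 1) :
    (∀ t : ℝ, 0 < t → t ≤ 1/2 → ({x : L | t ≤ μ x} = ∅ ∨ IsBooleanFilter {x : L | t ≤ μ x})) ↔ IsEIVQFuzzyBooleanFilter μ := by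
  constructor
  · intro H
    have key : ∀ t : ℝ, 0 < t → t ≤ 1/2 → ∀ a : L, t ≤ μ a → IsBooleanFilter {x : L | t ≤ μ x} := by
      intro t ht0 ht2 a ha
      rcases H t ht0 ht2 with h | h
      · exact absurd (Set.eq_empty_iff_forall_notMem.mp h a ha) (by simpa using ha)
      · exact h
    refine ⟨⟨?_, ?_⟩, ?_⟩
    · intro x
      set t := min (μ x) (1/2) with htdef
      rcases le_or_gt t 0 with h | h
      · exact le_trans h (hμ0 ⊤)
      · have hBF := key t h (min_le_right _ _) x (min_le_left _ _)
        exact hBF.1.1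
    · intro x y
      set t := min (min (μ (rimp x y)) (μ x)) (1/2) with htdef
      rcases le_or_gt t 0 with h | h
      · exact le_trans h (hμ0 y)
      · have hx : t ≤ μ x := le_trans (min_le_left _ _) (min_le_right _ _)
        have hxy : t ≤ μ (rimp x y) := le_trans (min_le_left _ _) (min_le_left _ _)
        have hBF := key t h (min_le_right _ _) x hx
        exact hBF.1.2 x y hx hxy
    · intro x y z
      set t := min (min (μ (rimp x (rimp (rimp z ⊥) y))) (μ (rimp y z))) ((1:ℝ)/2) with htdef
      rcases le_or_gt t 0 with h | h
      · exact le_trans h (hμ0 _)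
      · have h1 : t ≤ μ (rimp x (rimp (rimp z ⊥) y)) :=
          le_trans (min_le_left _ _) (min_le_left _ _)
        have h2 : t ≤ μ (rimp y z) := le_trans (min_le_left _ _) (min_le_right _ _)
        have hBF := key t h (min_le_right _ _) _ h1
        exact boolean_key hBF x y z h1 h2
  · intro hF t ht0 ht2
    rcases Set.eq_empty_or_nonempty {x : L | t ≤ μ x} with h | ⟨a, ha⟩
    · exact Or.inl h
    · right
      have hatop : t ≤ μ ⊤ := by
        have := hF.1.1 a
        exact le_trans (le_min ha ht2) this
      have hfil : IsFilter' {x : L | t ≤ μ x} := by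
        refine ⟨hatop, fun x y hx hxy => ?_⟩
        have := hF.1.2 x y
        exact le_trans (le_min (le_min hxy hx) ht2) this
      refine ⟨hfil, fun w => ?_⟩
      have hkey := hF.2 ⊤ (rimp w ⊥) (w ⊔ rimp w ⊥)
      have e1 : rimp ⊤ (w ⊔ rimp w ⊥) = w ⊔ rimp w ⊥ := mtl_top_rimp _
      have e2 : rimp (rimp (w ⊔ rimp w ⊥) ⊥) (rimp w ⊥) = ⊤ :=
        mtl_rimp_top_of_le (mtl_rimp_anti ⊥ le_sup_left)
      have e3 : rimp (rimp w ⊥) (w ⊔ rimp w ⊥) = ⊤ :=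
        mtl_rimp_top_of_le le_sup_right
      rw [e1, e2, e3, mtl_top_rimp] at hkey
      exact le_trans (le_min (le_min hatop hatop) ht2) hkey
end

section
/- Let μ be a fuzzy set of an MTL-algebra L. Then for every t ∈ (0,1] the ∈-level set F(t) = {x ∈ L : μ(x) ≥ t} is either empty or an MV-filter of L if and only if μ is a fuzzy MV-filter of L. -/
open MTL

variable {L : Type*} [MTL L]

/-- An MV-filter: a filter such that `x → y ∈ A` implies `((y → x) → x) → y ∈ A`. -/
def IsMVFilter (A : Set L) : Prop :=
  IsFilter' A ∧ ∀ x y : L, rimp x y ∈ A → rimp (rimp (rimp y x) x) y ∈ A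

/-- A fuzzy MV-filter: a fuzzy filter with `μ(((y → x) → x) → y) ≥ μ(x → y)`. -/
def IsFuzzyMVFilter (μ : L → ℝ) : Prop :=
  IsFuzzyFilter μ ∧ ∀ x y : L, μ (rimp (rimp (rimp y x) x) y) ≥ μ (rimp x y)

theorem stmt_13 (μ : L → ℝ) (hμ0 : ∀ x : L, 0 ≤ μ x) (hμ1 : ∀ x : L, μ x ≤ 1) :
    (∀ t : ℝ, 0 < t → t ≤ 1 → ({x : L | t ≤ μ x} = ∅ ∨ IsMVFilter {x : L | t ≤ μ x})) ↔ IsFuzzyMVFilter μ := by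

  constructor
  · intro h
    have key : ∀ t : ℝ, 0 < t → t ≤ 1 → ∀ a : L, t ≤ μ a → IsMVFilter {x : L | t ≤ μ x} := by
      intro t ht0 ht1 a ha
      rcases h t ht0 ht1 with he | hf
      · exact absurd he (Set.nonempty_iff_ne_empty.mp ⟨a, ha⟩)
      · exact hf
    refine ⟨⟨?_, ?_⟩, ?_⟩
    · intro x
      rcases le_or_gt (μ x) 0 with hx | hx
      · exact hx.trans (hμ0 _)
      · exact (key (μ x) hx (hμ1 x) x le_rfl).1.1
    · intro x y
      set t := min (μ (rimp x y)) (μ x) with hts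
      rcases le_or_gt t 0 with hx | hx
      · exact hx.trans (hμ0 _)
      · have ht1 : t ≤ 1 := (min_le_right _ _).trans (hμ1 x)
        have hk := key t hx ht1 x (min_le_right _ _)
        refine hk.1.2 x y ?_ ?_
        · exact Set.mem_setOf_eq ▸ min_le_right _ _
        · exact Set.mem_setOf_eq ▸ min_le_left _ _
    · intro x y
      rcases le_or_gt (μ (rimp x y)) 0 with hx | hx
      · exact hx.trans (hμ0 _)
      · exact (key _ hx (hμ1 _) _ le_rfl).2 x y (Set.mem_setOf_eq ▸ le_rfl)
  · rintro ⟨⟨h1, h2⟩, h3⟩ t ht0 ht1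
    rcases eq_or_ne ({x : L | t ≤ μ x}) ∅ with he | hne
    · exact Or.inl he
    right
    obtain ⟨a, ha⟩ := Set.nonempty_iff_ne_empty.mpr hne
    refine ⟨⟨ha.trans (h1 a), ?_⟩, ?_⟩
    · intro x y hx hxy
      exact le_trans (le_min hxy hx) (h2 x y)
    · intro x y hxy
      exact hxy.trans (h3 x y)
end

section
/- Let μ be a fuzzy set of an MTL-algebra L. Then μ is a fuzzy MV-filter of L if and only if for every t ∈ (0,1] the q-level set F_q(t) = {x ∈ L : μ(x) + t > 1} is either empty or an MV-filter of L. -/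
open MTL

variable {L : Type*} [MTL L]

private lemma key_real (a b : ℝ) (ha1 : a ≤ 1) (hb0 : 0 ≤ b)
    (h : ∀ t : ℝ, 0 < t → t ≤ 1 → 1 < a + t → 1 < b + t) : a ≤ b := by
  by_contra hc
  push_neg at hc
  have ht := h (1 - (a + b) / 2) (by linarith) (by linarith) (by linarith)
  linarith

theorem stmt_14 (μ : L → ℝ) (hμ0 : ∀ x : L, 0 ≤ μ x) (hμ1 : ∀ x : L, μ x ≤ 1) :
    IsFuzzyMVFilter μ ↔ (∀ t : ℝ, 0 < t → t ≤ 1 → ({x : L | 1 < μ x + t} = ∅ ∨ IsMVFilter {x : L | 1 < μ x + t})) := by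
  constructor
  · rintro ⟨⟨htop, hmp⟩, hmv⟩ t ht0 ht1
    by_cases hE : ({x : L | 1 < μ x + t} : Set L) = ∅
    · exact Or.inl hE
    right
    obtain ⟨x₀, hx₀⟩ := Set.nonempty_iff_ne_empty.2 hE
    refine ⟨⟨?_, ?_⟩, ?_⟩
    · have := htop x₀
      simp only [Set.mem_setOf_eq] at hx₀ ⊢
      linarith
    · intro x y hx hxy
      simp only [Set.mem_setOf_eq] at hx hxy ⊢
      have := hmp x y
      rcases min_le_iff.1 (le_refl (min (μ (rimp x y)) (μ x))) with h | h <;>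
        cases le_total (μ (rimp x y)) (μ x) with
        | inl hle => have := min_eq_left hle ▸ this; linarith [hmp x y, min_eq_left hle]
        | inr hle => have := min_eq_right hle ▸ this; linarith [hmp x y, min_eq_right hle]
    · intro x y hxy
      simp only [Set.mem_setOf_eq] at hxy ⊢
      have := hmv x y
      linarith
  · intro h
    have key : ∀ a b : L, (∀ t : ℝ, 0 < t → t ≤ 1 → (1 < μ a + t) → (1 < μ b + t)) → μ a ≤ μ b := by
      intro a b hab
      exact key_real _ _ (hμ1 a) (hμ0 b) hab
    refine ⟨⟨?_, ?_⟩, ?_⟩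
    · intro x
      apply key
      intro t ht0 ht1 hx
      rcases h t ht0 ht1 with hE | hMV
      · exact absurd hE (Set.nonempty_iff_ne_empty.1 ⟨x, hx⟩)
      · exact hMV.1.1
    · intro x y
      have hxy : ∀ t : ℝ, 0 < t → t ≤ 1 →
          1 < min (μ (rimp x y)) (μ x) + t → 1 < μ y + t := by
        intro t ht0 ht1 hm
        have h1 : 1 < μ (rimp x y) + t := by have := min_le_left (μ (rimp x y)) (μ x); linarith
        have h2 : 1 < μ x + t := by have := min_le_right (μ (rimp x y)) (μ x); linarith
        rcases h t ht0 ht1 with hE | hMV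
        · exact absurd hE (Set.nonempty_iff_ne_empty.1 ⟨x, h2⟩)
        · exact hMV.1.2 x y h2 h1
      exact key_real _ _ (le_trans (min_le_right _ _) (hμ1 x)) (hμ0 y) hxy
    · intro x y
      apply key
      intro t ht0 ht1 hxy
      rcases h t ht0 ht1 with hE | hMV
      · exact absurd hE (Set.nonempty_iff_ne_empty.1 ⟨_, hxy⟩)
      · exact hMV.2 x y hxy
end

section
/- Let μ be a fuzzy set of an MTL-algebra L. Then μ is an (∈,∈∨q)-fuzzy MV-filter of L if and only if for every t ∈ (0, 0.5] the ∈-level set F(t) = {x ∈ L : μ(x) ≥ t} is either empty or an MV-filter of L. -/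
open MTL

variable {L : Type*} [MTL L]

/-- An (∈,∈∨q)-fuzzy MV-filter: `μ(((y → x) → x) → y) ≥ min(μ(x → y), 0.5)`. -/
def IsEIVQFuzzyMVFilter (μ : L → ℝ) : Prop :=
  IsEIVQFuzzyFilter μ ∧
    ∀ x y : L, μ (rimp (rimp (rimp y x) x) y) ≥ min (μ (rimp x y)) (1/2)

theorem stmt_15 (μ : L → ℝ) (hμ0 : ∀ x : L, 0 ≤ μ x) (hμ1 : ∀ x : L, μ x ≤ 1) :
    IsEIVQFuzzyMVFilter μ ↔ (∀ t : ℝ, 0 < t → t ≤ 1/2 → ({x : L | t ≤ μ x} = ∅ ∨ IsMVFilter {x : L | t ≤ μ x})) := by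
  constructor
  · rintro ⟨⟨h1, h2⟩, h3⟩ t ht ht2
    rcases Set.eq_empty_or_nonempty {x : L | t ≤ μ x} with he | ⟨x0, hx0⟩
    · exact Or.inl he
    right
    refine ⟨⟨?_, ?_⟩, ?_⟩
    · exact le_trans (le_min hx0 ht2) (h1 x0)
    · intro x y hx hxy
      exact le_trans (le_min (le_min hxy hx) ht2) (h2 x y)
    · intro x y hxy
      exact le_trans (le_min hxy ht2) (h3 x y)
  · intro h
    have key : ∀ (s : ℝ) (z : L), s ≤ 1/2 → ({x : L | min s (1/2) ≤ μ x} = ∅ ∨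
        IsMVFilter {x : L | min s (1/2) ≤ μ x}) → (min s (1/2) ≤ μ z ↔ z ∈ {x : L | min s (1/2) ≤ μ x}) := by
      intro s z _ _; rfl
    have aux : ∀ (s : ℝ), 0 < s → s ≤ 1/2 → ({x : L | s ≤ μ x} = ∅ ∨ IsMVFilter {x : L | s ≤ μ x}) := h
    refine ⟨⟨?_, ?_⟩, ?_⟩
    · intro x
      set t := min (μ x) (1/2) with hts
      rcases le_or_gt t 0 with h0 | h0
      · exact le_trans h0 (hμ0 ⊤)
      · rcases aux t h0 (min_le_right _ _) with he | hf
        · exfalso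
          have : x ∈ {z : L | t ≤ μ z} := show t ≤ μ x from min_le_left _ _
          simp [he] at this
        · exact hf.1.1
    · intro x y
      set t := min (min (μ (rimp x y)) (μ x)) (1/2) with hts
      rcases le_or_gt t 0 with h0 | h0
      · exact le_trans h0 (hμ0 y)
      · rcases aux t h0 (min_le_right _ _) with he | hf
        · exfalso
          have : x ∈ {z : L | t ≤ μ z} := show t ≤ μ x from le_trans (min_le_left _ _) (min_le_right _ _)
          simp [he] at this
        · exact hf.1.2 x y (show t ≤ μ x from le_trans (min_le_left _ _) (min_le_right _ _))
            (show t ≤ μ (rimp x y) from le_trans (min_le_left _ _) (min_le_left _ _))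
    · intro x y
      set t := min (μ (rimp x y)) (1/2) with hts
      rcases le_or_gt t 0 with h0 | h0
      · exact le_trans h0 (hμ0 _)
      · rcases aux t h0 (min_le_right _ _) with he | hf
        · exfalso
          have : rimp x y ∈ {z : L | t ≤ μ z} := show t ≤ μ (rimp x y) from min_le_left _ _
          simp [he] at this
        · exact hf.2 x y (show t ≤ μ (rimp x y) from min_le_left _ _)
end

section
/- Let μ be a fuzzy set of an MTL-algebra L. Then for every t ∈ (0,1] the ∈-level set F(t) = {x ∈ L : μ(x) ≥ t} is either empty or a G-filter of L if and only if μ is a fuzzy G-filter of L. -/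
open MTL

variable {L : Type*} [MTL L]

/-- A G-filter: a filter such that `(x ⊙ x) → y ∈ A` implies `x → y ∈ A`. -/
def IsGFilter (A : Set L) : Prop :=
  IsFilter' A ∧ ∀ x y : L, rimp (odot x x) y ∈ A → rimp x y ∈ A

/-- A fuzzy G-filter: a fuzzy filter with `μ(x → y) ≥ μ((x ⊙ x) → y)`. -/
def IsFuzzyGFilter (μ : L → ℝ) : Prop :=
  IsFuzzyFilter μ ∧ ∀ x y : L, μ (rimp x y) ≥ μ (rimp (odot x x) y)

theorem stmt_17 (μ : L → ℝ) (hμ0 : ∀ x : L, 0 ≤ μ x) (hμ1 : ∀ x : L, μ x ≤ 1) :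
    (∀ t : ℝ, 0 < t → t ≤ 1 → ({x : L | t ≤ μ x} = ∅ ∨ IsGFilter {x : L | t ≤ μ x})) ↔ IsFuzzyGFilter μ := by
  constructor
  · intro h
    have key : ∀ t : ℝ, 0 < t → t ≤ 1 → ∀ z : L, t ≤ μ z → IsGFilter {x : L | t ≤ μ x} := by
      intro t ht ht1 z hz
      rcases h t ht ht1 with he | hg
      · exact absurd (Set.eq_empty_iff_forall_notMem.mp he z) (by simpa using hz)
      · exact hg
    refine ⟨⟨?_, ?_⟩, ?_⟩
    · intro x
      rcases lt_or_ge 0 (μ x) with hx | hx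
      · exact ((key (μ x) hx (hμ1 x) x le_rfl).1.1 : μ x ≤ μ ⊤)
      · exact le_trans hx (hμ0 _)
    · intro x y
      set t := min (μ (rimp x y)) (μ x) with htdef
      rcases lt_or_ge 0 t with ht | ht
      · have ht1 : t ≤ 1 := le_trans (min_le_right _ _) (hμ1 x)
        have hfil := key t ht ht1 x (min_le_right _ _)
        exact hfil.1.2 x y (show t ≤ μ x from min_le_right _ _) (show t ≤ μ (rimp x y) from min_le_left _ _)
      · exact le_trans ht (hμ0 _)
    · intro x y
      set t := μ (rimp (odot x x) y) with htdef
      rcases lt_or_ge 0 t with ht | ht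
      · exact (key t ht (hμ1 _) _ le_rfl).2 x y (show t ≤ μ (rimp (odot x x) y) from le_rfl)
      · exact le_trans ht (hμ0 _)
  · rintro ⟨⟨h1, h2⟩, hg⟩ t ht ht1
    rcases Set.eq_empty_or_nonempty {x : L | t ≤ μ x} with he | ⟨z, hz⟩
    · exact Or.inl he
    refine Or.inr ⟨⟨le_trans hz (h1 z), ?_⟩, ?_⟩
    · intro x y hx hxy
      exact le_trans (le_min hxy hx) (h2 x y)
    · intro x y hxy
      exact le_trans hxy (hg x y)
end

section
/- Let μ be a fuzzy set of an MTL-algebra L. Then for every t ∈ (0, 0.5] the ∈-level set F(t) = {x ∈ L : μ(x) ≥ t} is either empty or a G-filter of L if and only if μ is an (∈,∈∨q)-fuzzy G-filter of L. -/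
open MTL

variable {L : Type*} [MTL L]

/-- An (∈,∈∨q)-fuzzy G-filter: `μ(x → y) ≥ min(μ((x ⊙ x) → y), 0.5)`. -/
def IsEIVQFuzzyGFilter (μ : L → ℝ) : Prop :=
  IsEIVQFuzzyFilter μ ∧
    ∀ x y : L, μ (rimp x y) ≥ min (μ (rimp (odot x x) y)) (1/2)

theorem stmt_18 (μ : L → ℝ) (hμ0 : ∀ x : L, 0 ≤ μ x) (hμ1 : ∀ x : L, μ x ≤ 1) :
    (∀ t : ℝ, 0 < t → t ≤ 1/2 → ({x : L | t ≤ μ x} = ∅ ∨ IsGFilter {x : L | t ≤ μ x})) ↔ IsEIVQFuzzyGFilter μ := by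
  constructor
  · intro h
    have key : ∀ t : ℝ, 0 < t → t ≤ 1/2 → ∀ z : L, t ≤ μ z → IsGFilter {x : L | t ≤ μ x} := by
      intro t ht ht2 z hz
      rcases h t ht ht2 with he | hf
      · exact absurd (Set.eq_empty_iff_forall_notMem.mp he z) (by simpa using hz)
      · exact hf
    refine ⟨⟨?_, ?_⟩, ?_⟩
    · intro x
      by_cases hp : 0 < min (μ x) (1/2)
      · have hG := key _ hp (min_le_right _ _) x (min_le_left _ _)
        exact hG.1.1
      · exact le_trans (le_of_not_gt hp) (hμ0 _)
    · intro x y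
      set t := min (min (μ (rimp x y)) (μ x)) (1/2) with htdef
      by_cases hp : 0 < t
      · have ht2 : t ≤ 1/2 := min_le_right _ _
        have hx : t ≤ μ x := le_trans (min_le_left _ _) (min_le_right _ _)
        have hxy : t ≤ μ (rimp x y) := le_trans (min_le_left _ _) (min_le_left _ _)
        have hG := key t hp ht2 x hx
        exact hG.1.2 x y hx hxy
      · exact le_trans (le_of_not_gt hp) (hμ0 _)
    · intro x y
      set t := min (μ (rimp (odot x x) y)) (1/2) with htdef
      by_cases hp : 0 < t
      · have hG := key t hp (min_le_right _ _) _ (min_le_left _ _)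
        exact hG.2 x y (show t ≤ μ _ from min_le_left _ _)
      · exact le_trans (le_of_not_gt hp) (hμ0 _)
  · rintro ⟨⟨h1, h2⟩, h3⟩ t ht ht2
    by_cases hne : {x : L | t ≤ μ x} = ∅
    · exact Or.inl hne
    · right
      obtain ⟨z, hz⟩ := Set.nonempty_iff_ne_empty.mpr hne
      refine ⟨⟨?_, ?_⟩, ?_⟩
      · exact le_trans (le_min hz ht2) (h1 z)
      · intro a b ha hab
        exact le_trans (le_min (le_min hab ha) ht2) (h2 a b)
      · intro a b hab
        exact le_trans (le_min hab ht2) (h3 a b)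
end
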